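/- Let f, g be orientation-preserving homeomorphisms of ℝ such that the set of points where f is not differentiable is discrete, and similarly for g, and such that every non-trivial affine map of ℝ has at most one fixed point. If f and g commute and x is a boundary point of Supp(g) contained in an open interval J on which f has no fixed point (f moves every point of J), and the orbit {x·fⁿ : n ∈ ℤ} accumulates at a point of ℝ, then the set of boundary points of Supp(g) (transition points of g) is not discrete. Consequently, if the transition points of g form a discrete subset of ℝ, then f and g do not commute. -/

import Mathlib

/-- If `f` and `g` are commuting homeomorphisms of `ℝ` (with discrete sets of
non-differentiability points), `x` is a transition point of `g` lying in an open
interval on which `f` moves every point, and the `f`-orbit of `x` accumulates in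
`ℝ`, then the set of transition points of `g` is not discrete. -/
theorem transition_points_not_discrete_of_commuting (f g : ℝ ≃ₜ ℝ)
    (hfd : DiscreteTopology {y : ℝ | ¬ DifferentiableAt ℝ (⇑f) y})
    (hgd : DiscreteTopology {y : ℝ | ¬ DifferentiableAt ℝ (⇑g) y})
    (hcomm : ∀ y : ℝ, f (g y) = g (f y))
    (x : ℝ) (hx : x ∈ frontier {y : ℝ | g y ≠ y})
    (J : Set ℝ) (hJopen : IsOpen J) (hxJ : x ∈ J) (hmove : ∀ y ∈ J, f y ≠ y)
    (hacc : ∃ p : ℝ, AccPt p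
      (Filter.principal {y : ℝ | ∃ n : ℤ, y = ((f.toEquiv : Equiv.Perm ℝ) ^ n) x})) :
    ¬ DiscreteTopology ↥(frontier {y : ℝ | g y ≠ y}) := by
  intro hdisc
  set S : Set ℝ := {y : ℝ | g y ≠ y} with hS
  set F : Set ℝ := frontier S with hF
  -- f preserves S
  have hpre : f ⁻¹' S = S := by
    ext y
    simp only [Set.mem_preimage, hS, Set.mem_setOf_eq]
    constructor
    · intro h hg
      exact h (by rw [← hcomm, hg])
    · intro h hg
      rw [← hcomm] at hg
      exact h (f.injective hg)
  -- hence f preserves the frontier of S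
  have hFpre : f ⁻¹' F = F := by
    rw [hF, f.preimage_frontier, hpre]
  have hiff : ∀ y : ℝ, y ∈ F ↔ f y ∈ F := by
    intro y
    constructor
    · intro h; rw [← hFpre] at h; exact h
    · intro h; rw [← hFpre]; exact h
  -- the whole orbit lies in F
  have horb : ∀ n : ℤ, ((f.toEquiv : Equiv.Perm ℝ) ^ n) x ∈ F := by
    intro n
    induction n using Int.induction_on with
    | zero => simpa using hx
    | succ k ih =>
        have : ((f.toEquiv : Equiv.Perm ℝ) ^ ((k : ℤ) + 1)) x
            = f (((f.toEquiv : Equiv.Perm ℝ) ^ (k : ℤ)) x) := by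
          rw [add_comm, zpow_add, zpow_one]
          rfl
        rw [this]
        exact (hiff _).mp ih
    | pred k ih =>
        have : ((f.toEquiv : Equiv.Perm ℝ) ^ (-(k : ℤ) - 1)) x
            = f.symm (((f.toEquiv : Equiv.Perm ℝ) ^ (-(k : ℤ))) x) := by
          rw [sub_eq_add_neg, add_comm, zpow_add, zpow_neg, zpow_one]
          rfl
        rw [this]
        apply (hiff _).mpr
        have : f (f.symm (((f.toEquiv : Equiv.Perm ℝ) ^ (-(k : ℤ))) x))
            = ((f.toEquiv : Equiv.Perm ℝ) ^ (-(k : ℤ))) x := f.apply_symm_apply _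
        rw [this]
        exact ih
  obtain ⟨p, hp⟩ := hacc
  have hsub : {y : ℝ | ∃ n : ℤ, y = ((f.toEquiv : Equiv.Perm ℝ) ^ n) x} ⊆ F := by
    rintro y ⟨n, rfl⟩; exact horb n
  have hpF : AccPt p (Filter.principal F) :=
    hp.mono (Filter.principal_mono.mpr hsub)
  -- p is in F since F is closed
  have hFclosed : IsClosed F := isClosed_frontier
  have hcl : ClusterPt p (Filter.principal (F \ {p})) :=
    (accPt_principal_iff_clusterPt (x := p) (C := F)).mp hpF
  have hpmem : p ∈ F := by
    have : p ∈ closure (F \ {p}) := mem_closure_iff_clusterPt.mpr hcl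
    exact hFclosed.closure_subset (closure_mono Set.diff_subset this)
  have := (discreteTopology_subtype_iff.mp hdisc) p hpmem
  rw [AccPt, this] at hpF
  exact hpF.ne rfl
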